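/- Let G be a finite simple graph with vertex set {1,...,n}, G_j = G[{1,...,j}]. Suppose for every j ∈ {1,...,i} ∩ N(i+1) we have ω(G_j) < ω(G_i). Then G[{1,...,i} ∩ N(i+1)] contains no clique of size ω(G_i), and hence ω(G_{i+1}) = ω(G_i). -/

import Mathlib

open SimpleGraph

/-- Clique number of the subgraph of `G` induced by the vertex set `U`. -/
noncomputable def omegaOn {V : Type*} (G : SimpleGraph V) (U : Set V) : ℕ :=
  sSup {k | ∃ t : Finset V, ↑t ⊆ U ∧ G.IsNClique k t}

/-- A stable (independent) set of `G`. -/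
def IsStable {V : Type*} (G : SimpleGraph V) (s : Set V) : Prop :=
  ∀ u ∈ s, ∀ v ∈ s, ¬ G.Adj u v

/-- The vertex set `{1, ..., i}` of the `i`-th doll. -/
def Vi (i : ℕ) : Set ℕ := {v | 1 ≤ v ∧ v ≤ i}

lemma cliqueSet_bdd (G : SimpleGraph ℕ) (m : ℕ) (U : Set ℕ) (hU : U ⊆ Vi m) :
    BddAbove {k | ∃ t : Finset ℕ, ↑t ⊆ U ∧ G.IsNClique k t} := by
  refine ⟨m, ?_⟩
  rintro k ⟨t, ht, hc⟩
  have hsub : t ⊆ Finset.Icc 1 m := by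
    intro x hx
    have hx' := hU (ht hx)
    exact Finset.mem_Icc.2 ⟨hx'.1, hx'.2⟩
  have := Finset.card_le_card hsub
  simp only [Nat.card_Icc, Nat.add_sub_cancel] at this
  simpa [← hc.card_eq] using this

lemma cliqueSet_zero (G : SimpleGraph ℕ) (U : Set ℕ) :
    0 ∈ {k | ∃ t : Finset ℕ, ↑t ⊆ U ∧ G.IsNClique k t} :=
  ⟨∅, by simp, by simp [SimpleGraph.isNClique_empty]⟩

lemma le_omegaOn (G : SimpleGraph ℕ) (m k : ℕ) (U : Set ℕ) (hU : U ⊆ Vi m)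
    (t : Finset ℕ) (ht : ↑t ⊆ U) (hc : G.IsNClique k t) : k ≤ omegaOn G U :=
  le_csSup (cliqueSet_bdd G m U hU) ⟨t, ht, hc⟩

theorem russian_dolls_pruning_rule_two (G : SimpleGraph ℕ) (n : ℕ) (i : ℕ)
    (hi1 : 1 ≤ i) (hi : i < n)
    (h : ∀ j ∈ Vi i ∩ G.neighborSet (i + 1), omegaOn G (Vi j) < omegaOn G (Vi i)) :
    (¬ ∃ t : Finset ℕ, ↑t ⊆ Vi i ∩ G.neighborSet (i + 1) ∧
        G.IsNClique (omegaOn G (Vi i)) t) ∧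
    omegaOn G (Vi (i + 1)) = omegaOn G (Vi i) := by
  set m := omegaOn G (Vi i) with hm
  -- m ≥ 1
  have hm1 : 1 ≤ m := by
    apply le_omegaOn G i 1 (Vi i) (subset_refl _) {i}
    · intro x hx
      simp only [Finset.coe_singleton, Set.mem_singleton_iff] at hx
      rw [hx]
      exact ⟨hi1, le_refl i⟩
    · constructor
      · simp [SimpleGraph.isClique_iff, Set.Pairwise]
      · simp
  have part1 : ¬ ∃ t : Finset ℕ, ↑t ⊆ Vi i ∩ G.neighborSet (i + 1) ∧
      G.IsNClique m t := by
    rintro ⟨t, ht, hc⟩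
    have hne : t.Nonempty := by
      rw [← Finset.card_pos, hc.card_eq]; omega
    set j := t.max' hne with hj
    have hjt : j ∈ t := t.max'_mem hne
    have hjmem : j ∈ Vi i ∩ G.neighborSet (i + 1) := ht hjt
    have htj : ↑t ⊆ Vi j := by
      intro x hx
      exact ⟨(ht hx).1.1, t.le_max' x hx⟩
    have := le_omegaOn G j m (Vi j) (subset_refl _) t htj hc
    have := h j hjmem
    omega
  refine ⟨part1, ?_⟩
  have hmono : m ≤ omegaOn G (Vi (i + 1)) := by
    have hmem : m ∈ {k | ∃ t : Finset ℕ, ↑t ⊆ Vi i ∧ G.IsNClique k t} :=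
      Nat.sSup_mem ⟨0, cliqueSet_zero G _⟩ (cliqueSet_bdd G i _ (subset_refl _))
    obtain ⟨t, ht, hc⟩ := hmem
    exact le_omegaOn G (i + 1) m (Vi (i + 1)) (subset_refl _) t
      (fun x hx => ⟨(ht hx).1, le_trans (ht hx).2 (Nat.le_succ i)⟩) hc
  set M := omegaOn G (Vi (i + 1)) with hM
  have hMmem : M ∈ {k | ∃ t : Finset ℕ, ↑t ⊆ Vi (i + 1) ∧ G.IsNClique k t} :=
    Nat.sSup_mem ⟨0, cliqueSet_zero G _⟩ (cliqueSet_bdd G (i + 1) _ (subset_refl _))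
  obtain ⟨t, ht, hc⟩ := hMmem
  by_cases hmem : i + 1 ∈ t
  · -- erase i+1
    set t' := t.erase (i + 1) with ht'
    have hc' : G.IsNClique (M - 1) t' := by
      constructor
      · exact hc.1.subset (Finset.erase_subset _ _)
      · rw [Finset.card_erase_of_mem hmem, hc.card_eq]
    have ht'sub : ↑t' ⊆ Vi i ∩ G.neighborSet (i + 1) := by
      intro x hx
      simp only [ht', Finset.coe_erase, Set.mem_diff, Set.mem_singleton_iff] at hx
      obtain ⟨hxt, hxne⟩ := hx
      have hxVi := ht hxt
      have hx2 : x ≤ i + 1 := hxVi.2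
      refine ⟨⟨hxVi.1, by omega⟩, ?_⟩
      have hadj : G.Adj x (i + 1) := hc.1 hxt (by exact_mod_cast hmem) hxne
      exact hadj.symm
    by_contra hne
    have hMm : m < M := lt_of_le_of_ne hmono (Ne.symm hne)
    have : m ≤ t'.card := by rw [hc'.card_eq]; omega
    obtain ⟨s, hs, hscard⟩ := Finset.exists_subset_card_eq this
    exact part1 ⟨s, Set.Subset.trans (Finset.coe_subset.mpr hs) ht'sub,
      ⟨hc'.1.subset hs, hscard⟩⟩
  · have : ↑t ⊆ Vi i := by
      intro x hx
      have hxVi := ht hx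
      have hne : x ≠ i + 1 := fun he => hmem (he ▸ hx)
      have hx2 : x ≤ i + 1 := hxVi.2
      exact ⟨hxVi.1, by omega⟩
    have := le_omegaOn G i M (Vi i) (subset_refl _) t this hc
    omega
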